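/- arXiv:2408.11222 — 2 statements merged into one kernel-verified Lean document; each statement's English description precedes it below -/
import Mathlib

section
/- Let f, g : ℝ → ℂ be functions of locally bounded variation. Then the product rule d(fg) = f^A dg + g^A df holds, as an identity of measures on any bounded Borel subset of ℝ. -/
open MeasureTheory Set Function

noncomputable section

/-- The Lebesgue–Stieltjes measure `dm` of a monotone function `m : ℝ → ℝ`, determined by
`dm((x₁, x₂]) = m^R(x₂) - m^R(x₁)` where `m^R` denotes right-hand limits. -/
def monoStieltjes {m : ℝ → ℝ} (hm : Monotone m) : Measure ℝ :=
  hm.stieltjesFunction.measure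

/-- The average value `f^A = (f^L + f^R)/2` of a complex function of locally bounded
variation given by the monotone decomposition `f = f₁ - f₂ + i(f₃ - f₄)`. -/
def avgVal (f₁ f₂ f₃ f₄ : ℝ → ℝ) (x : ℝ) : ℂ :=
  (((leftLim f₁ x - leftLim f₂ x) + (rightLim f₁ x - rightLim f₂ x)) / 2 : ℝ)
    + Complex.I * (((leftLim f₃ x - leftLim f₄ x) + (rightLim f₃ x - rightLim f₄ x)) / 2 : ℝ)

namespace BVAux

variable {u v m f₁ f₂ f₃ f₄ : ℝ → ℝ} {a b : ℝ}

lemma leftLim_rightLim (hu : Monotone u) (y : ℝ) :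
    leftLim (rightLim u) y = leftLim u y := by
  apply leftLim_eq_of_tendsto
  apply tendsto_of_tendsto_of_tendsto_of_le_of_le' (hu.tendsto_leftLim y)
      tendsto_const_nhds
  · exact Filter.Eventually.of_forall fun x => hu.le_rightLim le_rfl
  · filter_upwards [self_mem_nhdsWithin] with x hx
    exact hu.rightLim_le_leftLim hx

lemma mS_Ioc (hu : Monotone u) (x y : ℝ) :
    monoStieltjes hu (Ioc x y) = ENNReal.ofReal (rightLim u y - rightLim u x) := by
  rw [monoStieltjes, StieltjesFunction.measure_Ioc]; rfl

lemma mS_Ioo (hu : Monotone u) (x y : ℝ) :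
    monoStieltjes hu (Ioo x y) = ENNReal.ofReal (leftLim u y - rightLim u x) := by
  have h : (hu.stieltjesFunction : ℝ → ℝ) = rightLim u := rfl
  rw [monoStieltjes, StieltjesFunction.measure_Ioo, h, leftLim_rightLim hu]

lemma mS_singleton (hu : Monotone u) (x : ℝ) :
    monoStieltjes hu {x} = ENNReal.ofReal (rightLim u x - leftLim u x) := by
  have h : (hu.stieltjesFunction : ℝ → ℝ) = rightLim u := rfl
  rw [monoStieltjes, StieltjesFunction.measure_singleton, h, leftLim_rightLim hu]

lemma mS_Ioc_lt_top (hu : Monotone u) (a b : ℝ) : monoStieltjes hu (Ioc a b) < ⊤ := by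
  rw [mS_Ioc]; exact ENNReal.ofReal_lt_top

instance fin_restrict (hu : Monotone u) (a b : ℝ) :
    IsFiniteMeasure ((monoStieltjes hu).restrict (Ioc a b)) :=
  ⟨by rw [Measure.restrict_apply_univ]; exact mS_Ioc_lt_top hu a b⟩

lemma intgOn (hw : Monotone v) (hu : Monotone u) (a b : ℝ) :
    IntegrableOn v (Ioc a b) (monoStieltjes hu) := by
  rcases le_or_gt a b with hab | hab
  · have : IsFiniteMeasure ((monoStieltjes hu).restrict (Ioc a b)) := fin_restrict hu a b
    refine Integrable.mono' (g := fun _ => |v a| ⊔ |v b|) ?_ ?_ ?_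
    · exact integrable_const _
    · exact (hw.measurable.aestronglyMeasurable).restrict
    · rw [ae_restrict_iff' measurableSet_Ioc]
      refine Filter.Eventually.of_forall fun x hx => ?_
      rw [Real.norm_eq_abs, abs_le]
      constructor
      · calc -(|v a| ⊔ |v b|) ≤ -|v a| := by simp
          _ ≤ v a := neg_abs_le _
          _ ≤ v x := hw hx.1.le
      · calc v x ≤ v b := hw hx.2
          _ ≤ |v b| := le_abs_self _
          _ ≤ _ := le_max_right _ _
  · rw [IntegrableOn, Ioc_eq_empty hab.asymm, Measure.restrict_empty]
    exact integrable_zero_measure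

lemma half (hu : Monotone u) (hv : Monotone v) (hab : a ≤ b) :
    (rightLim u b - rightLim u a) * (rightLim v b - rightLim v a)
      = (∫ y in Ioc a b, (leftLim u y - rightLim u a) ∂(monoStieltjes hv))
        + ∫ x in Ioc a b, (rightLim v x - rightLim v a) ∂(monoStieltjes hu) := by
  set μ := monoStieltjes hu with hμdef
  set ν := monoStieltjes hv with hνdef
  set μ' := μ.restrict (Ioc a b) with hμ'
  set ν' := ν.restrict (Ioc a b) with hν'
  haveI : IsFiniteMeasure μ' := fin_restrict hu a b
  haveI : IsFiniteMeasure ν' := fin_restrict hv a b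
  have hS1 : MeasurableSet {p : ℝ × ℝ | p.1 < p.2} :=
    measurableSet_lt measurable_fst measurable_snd
  have hS2 : MeasurableSet {p : ℝ × ℝ | p.2 < p.1} :=
    measurableSet_lt measurable_snd measurable_fst
  have hS3 : MeasurableSet {p : ℝ × ℝ | p.1 = p.2} :=
    measurableSet_eq_fun measurable_fst measurable_snd
  have hunion : (univ : Set (ℝ × ℝ))
      = {p : ℝ × ℝ | p.1 < p.2} ∪ ({p : ℝ × ℝ | p.2 < p.1} ∪ {p : ℝ × ℝ | p.1 = p.2}) := by
    ext p
    simp only [mem_univ, mem_union, mem_setOf_eq, true_iff]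
    rcases lt_trichotomy p.1 p.2 with h | h | h
    · exact Or.inl h
    · exact Or.inr (Or.inr h)
    · exact Or.inr (Or.inl h)
  have hd1 : Disjoint {p : ℝ × ℝ | p.1 < p.2}
      ({p : ℝ × ℝ | p.2 < p.1} ∪ {p : ℝ × ℝ | p.1 = p.2}) := by
    rw [Set.disjoint_left]
    rintro p hp hp'
    simp only [mem_union, mem_setOf_eq] at hp hp'
    rcases hp' with hp' | hp'
    · exact hp.asymm hp'
    · exact (ne_of_lt hp) hp'
  have hd2 : Disjoint {p : ℝ × ℝ | p.2 < p.1} {p : ℝ × ℝ | p.1 = p.2} := by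
    rw [Set.disjoint_left]
    intro p hp hp'
    simp only [mem_setOf_eq] at hp hp'
    exact (ne_of_lt hp) hp'.symm
  have hT : (μ'.prod ν') univ
      = ENNReal.ofReal (rightLim u b - rightLim u a)
        * ENNReal.ofReal (rightLim v b - rightLim v a) := by
    rw [← Set.univ_prod_univ, Measure.prod_prod, Measure.restrict_apply_univ,
      Measure.restrict_apply_univ, hμdef, hνdef, mS_Ioc, mS_Ioc]
  have hP1 : (μ'.prod ν') {p : ℝ × ℝ | p.1 < p.2}
      = ∫⁻ y in Ioc a b, ENNReal.ofReal (leftLim u y - rightLim u a) ∂ν := by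
    rw [Measure.prod_apply_symm hS1]
    apply setLIntegral_congr_fun measurableSet_Ioc
    refine fun y hy => ?_
    show μ' (Iio y) = _
    rw [hμ', Measure.restrict_apply measurableSet_Iio]
    have : Iio y ∩ Ioc a b = Ioo a y := by
      ext z
      simp only [mem_inter_iff, mem_Iio, mem_Ioc, mem_Ioo]
      exact ⟨fun h => ⟨h.2.1, h.1⟩, fun h => ⟨h.2, h.1, h.2.le.trans hy.2⟩⟩
    rw [this, hμdef, mS_Ioo hu]
  have hP2 : (μ'.prod ν') {p : ℝ × ℝ | p.2 < p.1}
      = ∫⁻ x in Ioc a b, ENNReal.ofReal (leftLim v x - rightLim v a) ∂μ := by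
    rw [Measure.prod_apply hS2]
    apply setLIntegral_congr_fun measurableSet_Ioc
    refine fun x hx => ?_
    show ν' (Iio x) = _
    rw [hν', Measure.restrict_apply measurableSet_Iio]
    have : Iio x ∩ Ioc a b = Ioo a x := by
      ext z
      simp only [mem_inter_iff, mem_Iio, mem_Ioc, mem_Ioo]
      exact ⟨fun h => ⟨h.2.1, h.1⟩, fun h => ⟨h.2, h.1, h.2.le.trans hx.2⟩⟩
    rw [this, hνdef, mS_Ioo hv]
  have hP3 : (μ'.prod ν') {p : ℝ × ℝ | p.1 = p.2}
      = ∫⁻ x in Ioc a b, ENNReal.ofReal (rightLim v x - leftLim v x) ∂μ := by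
    rw [Measure.prod_apply hS3]
    have hpre : ∀ x : ℝ, (Prod.mk x ⁻¹' {p : ℝ × ℝ | p.1 = p.2}) = {x} := by
      intro x; ext y; simp [eq_comm]
    simp_rw [hpre]
    apply setLIntegral_congr_fun measurableSet_Ioc
    refine fun x hx => ?_
    dsimp only
    rw [hν', Measure.restrict_apply (measurableSet_singleton x),
      Set.inter_eq_left.mpr (singleton_subset_iff.mpr hx), hνdef, mS_singleton hv]
  have hm2 : Measurable fun x => ENNReal.ofReal (leftLim v x - rightLim v a) :=
    ENNReal.measurable_ofReal.comp (hv.leftLim.measurable.sub measurable_const)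
  have hP23 : (∫⁻ x in Ioc a b, ENNReal.ofReal (leftLim v x - rightLim v a) ∂μ)
      + ∫⁻ x in Ioc a b, ENNReal.ofReal (rightLim v x - leftLim v x) ∂μ
      = ∫⁻ x in Ioc a b, ENNReal.ofReal (rightLim v x - rightLim v a) ∂μ := by
    rw [← lintegral_add_left hm2]
    apply setLIntegral_congr_fun measurableSet_Ioc
    refine fun x hx => ?_
    dsimp only
    rw [← ENNReal.ofReal_add (sub_nonneg.2 (hv.rightLim_le_leftLim hx.1))
      (sub_nonneg.2 (hv.leftLim_le_rightLim le_rfl))]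
    congr 1
    ring
  have hEq : ENNReal.ofReal (rightLim u b - rightLim u a)
        * ENNReal.ofReal (rightLim v b - rightLim v a)
      = (∫⁻ y in Ioc a b, ENNReal.ofReal (leftLim u y - rightLim u a) ∂ν)
        + ∫⁻ x in Ioc a b, ENNReal.ofReal (rightLim v x - rightLim v a) ∂μ := by
    rw [← hT, hunion, measure_union hd1 (hS2.union hS3), measure_union hd2 hS3,
      hP1, hP2, hP3, hP23]
  have i1 : Integrable (fun y => leftLim u y - rightLim u a) ν' :=
    (intgOn hu.leftLim hv a b).sub
      ((integrableOn_const_iff (C := rightLim u a)).mpr (Or.inr (mS_Ioc_lt_top hv a b)))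
  have i2 : Integrable (fun x => rightLim v x - rightLim v a) μ' :=
    (intgOn hv.rightLim hu a b).sub
      ((integrableOn_const_iff (C := rightLim v a)).mpr (Or.inr (mS_Ioc_lt_top hu a b)))
  have n1 : 0 ≤ᵐ[ν'] fun y => leftLim u y - rightLim u a := by
    filter_upwards [ae_restrict_mem measurableSet_Ioc] with x hx
    exact sub_nonneg.2 (hu.rightLim_le_leftLim hx.1)
  have n2 : 0 ≤ᵐ[μ'] fun x => rightLim v x - rightLim v a := by
    filter_upwards [ae_restrict_mem measurableSet_Ioc] with x hx
    exact sub_nonneg.2 (hv.rightLim (hx.1.le))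
  rw [← ofReal_integral_eq_lintegral_ofReal i1 n1, ← ofReal_integral_eq_lintegral_ofReal i2 n2,
    ← ENNReal.ofReal_mul (sub_nonneg.2 (hu.rightLim hab)),
    ← ENNReal.ofReal_add (integral_nonneg_of_ae n1) (integral_nonneg_of_ae n2)] at hEq
  exact (ENNReal.ofReal_eq_ofReal_iff
    (mul_nonneg (sub_nonneg.2 (hu.rightLim hab)) (sub_nonneg.2 (hv.rightLim hab)))
    (add_nonneg (integral_nonneg_of_ae n1) (integral_nonneg_of_ae n2))).mp hEq

lemma expand_sub_const (hu : Monotone u) (hv : Monotone v) (hab : a ≤ b) (c : ℝ) :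
    ∫ y in Ioc a b, (leftLim u y - c) ∂(monoStieltjes hv)
      = (∫ y in Ioc a b, leftLim u y ∂(monoStieltjes hv))
        - c * (rightLim v b - rightLim v a) := by
  rw [integral_sub (intgOn hu.leftLim hv a b)
    ((integrableOn_const_iff (C := c)).mpr (Or.inr (mS_Ioc_lt_top hv a b))),
    setIntegral_const, Measure.real, mS_Ioc, ENNReal.toReal_ofReal (sub_nonneg.2 (hv.rightLim hab)),
    smul_eq_mul, mul_comm]

lemma expand_sub_const' (hu : Monotone u) (hv : Monotone v) (hab : a ≤ b) (c : ℝ) :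
    ∫ y in Ioc a b, (rightLim u y - c) ∂(monoStieltjes hv)
      = (∫ y in Ioc a b, rightLim u y ∂(monoStieltjes hv))
        - c * (rightLim v b - rightLim v a) := by
  rw [integral_sub (intgOn hu.rightLim hv a b)
    ((integrableOn_const_iff (C := c)).mpr (Or.inr (mS_Ioc_lt_top hv a b))),
    setIntegral_const, Measure.real, mS_Ioc, ENNReal.toReal_ofReal (sub_nonneg.2 (hv.rightLim hab)),
    smul_eq_mul, mul_comm]

lemma avg_expand (hu : Monotone u) (hv : Monotone v) :
    ∫ x in Ioc a b, (leftLim u x + rightLim u x) / 2 ∂(monoStieltjes hv)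
      = ((∫ x in Ioc a b, leftLim u x ∂(monoStieltjes hv))
          + ∫ x in Ioc a b, rightLim u x ∂(monoStieltjes hv)) / 2 := by
  rw [integral_div, integral_add (intgOn hu.leftLim hv a b) (intgOn hu.rightLim hv a b)]

lemma key (hu : Monotone u) (hv : Monotone v) (hab : a ≤ b) :
    (∫ x in Ioc a b, (leftLim u x + rightLim u x) / 2 ∂(monoStieltjes hv))
      + ∫ x in Ioc a b, (leftLim v x + rightLim v x) / 2 ∂(monoStieltjes hu)
      = rightLim u b * rightLim v b - rightLim u a * rightLim v a := by
  have h1 := half hu hv hab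
  have h2 := half hv hu hab
  rw [expand_sub_const hu hv hab, expand_sub_const' hv hu hab] at h1
  rw [expand_sub_const hv hu hab, expand_sub_const' hu hv hab] at h2
  rw [avg_expand hu hv, avg_expand hv hu]
  nlinarith [h1, h2]

lemma integral_avgVal (hf₁ : Monotone f₁) (hf₂ : Monotone f₂) (hf₃ : Monotone f₃)
    (hf₄ : Monotone f₄) (hm : Monotone m) (a b : ℝ) :
    ∫ x in Ioc a b, avgVal f₁ f₂ f₃ f₄ x ∂(monoStieltjes hm)
      = (((∫ x in Ioc a b, (leftLim f₁ x + rightLim f₁ x) / 2 ∂(monoStieltjes hm))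
          - ∫ x in Ioc a b, (leftLim f₂ x + rightLim f₂ x) / 2 ∂(monoStieltjes hm) : ℝ) : ℂ)
        + Complex.I * (((∫ x in Ioc a b, (leftLim f₃ x + rightLim f₃ x) / 2 ∂(monoStieltjes hm))
          - ∫ x in Ioc a b, (leftLim f₄ x + rightLim f₄ x) / 2 ∂(monoStieltjes hm) : ℝ) : ℂ) := by
  have i1 : IntegrableOn (fun x => (leftLim f₁ x + rightLim f₁ x) / 2
      - (leftLim f₂ x + rightLim f₂ x) / 2) (Ioc a b) (monoStieltjes hm) :=
    (((intgOn hf₁.leftLim hm a b).add (intgOn hf₁.rightLim hm a b)).div_const 2).sub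
      (((intgOn hf₂.leftLim hm a b).add (intgOn hf₂.rightLim hm a b)).div_const 2)
  have i2 : IntegrableOn (fun x => (leftLim f₃ x + rightLim f₃ x) / 2
      - (leftLim f₄ x + rightLim f₄ x) / 2) (Ioc a b) (monoStieltjes hm) :=
    (((intgOn hf₃.leftLim hm a b).add (intgOn hf₃.rightLim hm a b)).div_const 2).sub
      (((intgOn hf₄.leftLim hm a b).add (intgOn hf₄.rightLim hm a b)).div_const 2)
  have h : ∀ x : ℝ, avgVal f₁ f₂ f₃ f₄ x
      = (((leftLim f₁ x + rightLim f₁ x) / 2 - (leftLim f₂ x + rightLim f₂ x) / 2 : ℝ) : ℂ)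
        + Complex.I * (((leftLim f₃ x + rightLim f₃ x) / 2
            - (leftLim f₄ x + rightLim f₄ x) / 2 : ℝ) : ℂ) := by
    intro x
    unfold avgVal
    push_cast
    ring
  have j1 : Integrable (fun x => (((leftLim f₁ x + rightLim f₁ x) / 2
      - (leftLim f₂ x + rightLim f₂ x) / 2 : ℝ) : ℂ))
      ((monoStieltjes hm).restrict (Ioc a b)) := i1.ofReal
  have j2 : Integrable (fun x => (((leftLim f₃ x + rightLim f₃ x) / 2
      - (leftLim f₄ x + rightLim f₄ x) / 2 : ℝ) : ℂ))
      ((monoStieltjes hm).restrict (Ioc a b)) := i2.ofReal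
  have e1 : ∫ x in Ioc a b, (((leftLim f₁ x + rightLim f₁ x) / 2
        - (leftLim f₂ x + rightLim f₂ x) / 2 : ℝ) : ℂ) ∂(monoStieltjes hm)
      = ((∫ x in Ioc a b, ((leftLim f₁ x + rightLim f₁ x) / 2
        - (leftLim f₂ x + rightLim f₂ x) / 2) ∂(monoStieltjes hm) : ℝ) : ℂ) := by
    simpa using (ContinuousLinearMap.integral_comp_comm Complex.ofRealCLM i1)
  have e2 : ∫ x in Ioc a b, (((leftLim f₃ x + rightLim f₃ x) / 2
        - (leftLim f₄ x + rightLim f₄ x) / 2 : ℝ) : ℂ) ∂(monoStieltjes hm)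
      = ((∫ x in Ioc a b, ((leftLim f₃ x + rightLim f₃ x) / 2
        - (leftLim f₄ x + rightLim f₄ x) / 2) ∂(monoStieltjes hm) : ℝ) : ℂ) := by
    simpa using (ContinuousLinearMap.integral_comp_comm Complex.ofRealCLM i2)
  rw [show (fun x => avgVal f₁ f₂ f₃ f₄ x) = _ from funext h]
  have s1 : ∫ x in Ioc a b, ((leftLim f₁ x + rightLim f₁ x) / 2
        - (leftLim f₂ x + rightLim f₂ x) / 2) ∂(monoStieltjes hm)
      = (∫ x in Ioc a b, (leftLim f₁ x + rightLim f₁ x) / 2 ∂(monoStieltjes hm))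
        - ∫ x in Ioc a b, (leftLim f₂ x + rightLim f₂ x) / 2 ∂(monoStieltjes hm) :=
    integral_sub (((intgOn hf₁.leftLim hm a b).add (intgOn hf₁.rightLim hm a b)).div_const 2)
      (((intgOn hf₂.leftLim hm a b).add (intgOn hf₂.rightLim hm a b)).div_const 2)
  have s2 : ∫ x in Ioc a b, ((leftLim f₃ x + rightLim f₃ x) / 2
        - (leftLim f₄ x + rightLim f₄ x) / 2) ∂(monoStieltjes hm)
      = (∫ x in Ioc a b, (leftLim f₃ x + rightLim f₃ x) / 2 ∂(monoStieltjes hm))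
        - ∫ x in Ioc a b, (leftLim f₄ x + rightLim f₄ x) / 2 ∂(monoStieltjes hm) :=
    integral_sub (((intgOn hf₃.leftLim hm a b).add (intgOn hf₃.rightLim hm a b)).div_const 2)
      (((intgOn hf₄.leftLim hm a b).add (intgOn hf₄.rightLim hm a b)).div_const 2)
  rw [integral_add j1 (j2.const_mul Complex.I), integral_const_mul, e1, e2, s1, s2]

end BVAux

open BVAux

/-- product rule for locally BV functions. Let `f, g : ℝ → ℂ` have locally
bounded variation, with monotone decompositions `f = f₁ - f₂ + i(f₃ - f₄)`,
`g = g₁ - g₂ + i(g₃ - g₄)`, and let `fg = p₁ - p₂ + i(p₃ - p₄)` be a monotone decomposition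
of the product. Then `d(fg) = f^A dg + g^A df` as measures on bounded Borel subsets of `ℝ`:
for all `a ≤ b`, `d(fg)((a,b]) = ∫_{(a,b]} f^A dg + ∫_{(a,b]} g^A df`. -/
theorem bv_product_rule
    (f₁ f₂ f₃ f₄ g₁ g₂ g₃ g₄ p₁ p₂ p₃ p₄ : ℝ → ℝ)
    (hf₁ : Monotone f₁) (hf₂ : Monotone f₂) (hf₃ : Monotone f₃) (hf₄ : Monotone f₄)
    (hg₁ : Monotone g₁) (hg₂ : Monotone g₂) (hg₃ : Monotone g₃) (hg₄ : Monotone g₄)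
    (hp₁ : Monotone p₁) (hp₂ : Monotone p₂) (hp₃ : Monotone p₃) (hp₄ : Monotone p₄)
    (f g : ℝ → ℂ)
    (hf : ∀ x, f x = ((f₁ x - f₂ x : ℝ) : ℂ) + Complex.I * ((f₃ x - f₄ x : ℝ) : ℂ))
    (hg : ∀ x, g x = ((g₁ x - g₂ x : ℝ) : ℂ) + Complex.I * ((g₃ x - g₄ x : ℝ) : ℂ))
    (hp : ∀ x, f x * g x = ((p₁ x - p₂ x : ℝ) : ℂ) + Complex.I * ((p₃ x - p₄ x : ℝ) : ℂ)) :
    ∀ a b : ℝ, a ≤ b →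
      ((((monoStieltjes hp₁) (Ioc a b)).toReal - ((monoStieltjes hp₂) (Ioc a b)).toReal : ℝ) : ℂ)
          + Complex.I *
            ((((monoStieltjes hp₃) (Ioc a b)).toReal
              - ((monoStieltjes hp₄) (Ioc a b)).toReal : ℝ) : ℂ)
        = ((∫ x in Ioc a b, avgVal f₁ f₂ f₃ f₄ x ∂(monoStieltjes hg₁))
            - ∫ x in Ioc a b, avgVal f₁ f₂ f₃ f₄ x ∂(monoStieltjes hg₂))
          + Complex.I *
            ((∫ x in Ioc a b, avgVal f₁ f₂ f₃ f₄ x ∂(monoStieltjes hg₃))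
              - ∫ x in Ioc a b, avgVal f₁ f₂ f₃ f₄ x ∂(monoStieltjes hg₄))
          + (((∫ x in Ioc a b, avgVal g₁ g₂ g₃ g₄ x ∂(monoStieltjes hf₁))
              - ∫ x in Ioc a b, avgVal g₁ g₂ g₃ g₄ x ∂(monoStieltjes hf₂))
            + Complex.I *
              ((∫ x in Ioc a b, avgVal g₁ g₂ g₃ g₄ x ∂(monoStieltjes hf₃))
                - ∫ x in Ioc a b, avgVal g₁ g₂ g₃ g₄ x ∂(monoStieltjes hf₄))) := by
  intro a b hab
  have hre : ∀ t, p₁ t - p₂ t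
      = (f₁ t - f₂ t) * (g₁ t - g₂ t) - (f₃ t - f₄ t) * (g₃ t - g₄ t) := by
    intro t
    have h := hp t
    rw [hf t, hg t] at h
    have h2 := congrArg Complex.re h
    simp [Complex.mul_re, Complex.mul_im] at h2
    linarith
  have him : ∀ t, p₃ t - p₄ t
      = (f₁ t - f₂ t) * (g₃ t - g₄ t) + (f₃ t - f₄ t) * (g₁ t - g₂ t) := by
    intro t
    have h := hp t
    rw [hf t, hg t] at h
    have h2 := congrArg Complex.im h
    simp [Complex.mul_re, Complex.mul_im] at h2
    linarith
  have Rre : ∀ x, rightLim p₁ x - rightLim p₂ x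
      = (rightLim f₁ x - rightLim f₂ x) * (rightLim g₁ x - rightLim g₂ x)
        - (rightLim f₃ x - rightLim f₄ x) * (rightLim g₃ x - rightLim g₄ x) := by
    intro x
    have T1 : Filter.Tendsto (fun t => p₁ t - p₂ t) (nhdsWithin x (Ioi x))
        (nhds (rightLim p₁ x - rightLim p₂ x)) :=
      (hp₁.tendsto_rightLim x).sub (hp₂.tendsto_rightLim x)
    have T2 : Filter.Tendsto
        (fun t => (f₁ t - f₂ t) * (g₁ t - g₂ t) - (f₃ t - f₄ t) * (g₃ t - g₄ t))
        (nhdsWithin x (Ioi x))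
        (nhds ((rightLim f₁ x - rightLim f₂ x) * (rightLim g₁ x - rightLim g₂ x)
          - (rightLim f₃ x - rightLim f₄ x) * (rightLim g₃ x - rightLim g₄ x))) :=
      (((hf₁.tendsto_rightLim x).sub (hf₂.tendsto_rightLim x)).mul
        ((hg₁.tendsto_rightLim x).sub (hg₂.tendsto_rightLim x))).sub
        (((hf₃.tendsto_rightLim x).sub (hf₄.tendsto_rightLim x)).mul
          ((hg₃.tendsto_rightLim x).sub (hg₄.tendsto_rightLim x)))
    exact tendsto_nhds_unique (T1.congr hre) T2
  have Rim : ∀ x, rightLim p₃ x - rightLim p₄ x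
      = (rightLim f₁ x - rightLim f₂ x) * (rightLim g₃ x - rightLim g₄ x)
        + (rightLim f₃ x - rightLim f₄ x) * (rightLim g₁ x - rightLim g₂ x) := by
    intro x
    have T1 : Filter.Tendsto (fun t => p₃ t - p₄ t) (nhdsWithin x (Ioi x))
        (nhds (rightLim p₃ x - rightLim p₄ x)) :=
      (hp₃.tendsto_rightLim x).sub (hp₄.tendsto_rightLim x)
    have T2 : Filter.Tendsto
        (fun t => (f₁ t - f₂ t) * (g₃ t - g₄ t) + (f₃ t - f₄ t) * (g₁ t - g₂ t))
        (nhdsWithin x (Ioi x))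
        (nhds ((rightLim f₁ x - rightLim f₂ x) * (rightLim g₃ x - rightLim g₄ x)
          + (rightLim f₃ x - rightLim f₄ x) * (rightLim g₁ x - rightLim g₂ x))) :=
      (((hf₁.tendsto_rightLim x).sub (hf₂.tendsto_rightLim x)).mul
        ((hg₃.tendsto_rightLim x).sub (hg₄.tendsto_rightLim x))).add
        (((hf₃.tendsto_rightLim x).sub (hf₄.tendsto_rightLim x)).mul
          ((hg₁.tendsto_rightLim x).sub (hg₂.tendsto_rightLim x)))
    exact tendsto_nhds_unique (T1.congr him) T2
  have m1 : ((monoStieltjes hp₁) (Ioc a b)).toReal = rightLim p₁ b - rightLim p₁ a := by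
    rw [mS_Ioc]; exact ENNReal.toReal_ofReal (sub_nonneg.2 (hp₁.rightLim hab))
  have m2 : ((monoStieltjes hp₂) (Ioc a b)).toReal = rightLim p₂ b - rightLim p₂ a := by
    rw [mS_Ioc]; exact ENNReal.toReal_ofReal (sub_nonneg.2 (hp₂.rightLim hab))
  have m3 : ((monoStieltjes hp₃) (Ioc a b)).toReal = rightLim p₃ b - rightLim p₃ a := by
    rw [mS_Ioc]; exact ENNReal.toReal_ofReal (sub_nonneg.2 (hp₃.rightLim hab))
  have m4 : ((monoStieltjes hp₄) (Ioc a b)).toReal = rightLim p₄ b - rightLim p₄ a := by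
    rw [mS_Ioc]; exact ENNReal.toReal_ofReal (sub_nonneg.2 (hp₄.rightLim hab))
  rw [m1, m2, m3, m4,
    integral_avgVal hf₁ hf₂ hf₃ hf₄ hg₁ a b, integral_avgVal hf₁ hf₂ hf₃ hf₄ hg₂ a b,
    integral_avgVal hf₁ hf₂ hf₃ hf₄ hg₃ a b, integral_avgVal hf₁ hf₂ hf₃ hf₄ hg₄ a b,
    integral_avgVal hg₁ hg₂ hg₃ hg₄ hf₁ a b, integral_avgVal hg₁ hg₂ hg₃ hg₄ hf₂ a b,
    integral_avgVal hg₁ hg₂ hg₃ hg₄ hf₃ a b, integral_avgVal hg₁ hg₂ hg₃ hg₄ hf₄ a b]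
  have K11 := key hf₁ hg₁ hab
  have K21 := key hf₂ hg₁ hab
  have K12 := key hf₁ hg₂ hab
  have K22 := key hf₂ hg₂ hab
  have K33 := key hf₃ hg₃ hab
  have K43 := key hf₄ hg₃ hab
  have K34 := key hf₃ hg₄ hab
  have K44 := key hf₄ hg₄ hab
  have K31 := key hf₃ hg₁ hab
  have K41 := key hf₄ hg₁ hab
  have K32 := key hf₃ hg₂ hab
  have K42 := key hf₄ hg₂ hab
  have K13 := key hf₁ hg₃ hab
  have K23 := key hf₂ hg₃ hab
  have K14 := key hf₁ hg₄ hab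
  have K24 := key hf₂ hg₄ hab
  have Ea := Rre a
  have Eb := Rre b
  have Fa := Rim a
  have Fb := Rim b
  rw [Complex.ext_iff]
  constructor
  · simp only [Complex.add_re, Complex.sub_re, Complex.neg_re, Complex.add_im,
      Complex.sub_im, Complex.neg_im, Complex.mul_re, Complex.mul_im,
      Complex.I_re, Complex.I_im, Complex.ofReal_re, Complex.ofReal_im,
      zero_mul, mul_zero, one_mul, mul_one, zero_sub, sub_zero, zero_add, add_zero,
      neg_zero, neg_neg]
    linear_combination Eb - Ea - K11 + K21 + K12 - K22 + K33 - K43 - K34 + K44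
  · simp only [Complex.add_re, Complex.sub_re, Complex.neg_re, Complex.add_im,
      Complex.sub_im, Complex.neg_im, Complex.mul_re, Complex.mul_im,
      Complex.I_re, Complex.I_im, Complex.ofReal_re, Complex.ofReal_im,
      zero_mul, mul_zero, one_mul, mul_one, zero_sub, sub_zero, zero_add, add_zero,
      neg_zero, neg_neg]
    linear_combination Fb - Fa - K31 + K41 + K32 - K42 - K13 + K23 + K14 - K24

end
end

section
/- Let f : ℝ → ℝ be continuous and of locally bounded variation. Then the chain rule d(e^f) = e^f df holds, as an identity of measures on any bounded Borel subset of ℝ. -/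
open MeasureTheory Set Function Filter Topology

noncomputable section

/-- If `f = m₁ - m₂` is continuous, the right-limit regularizations of `m₁, m₂` also
subtract to `f`. -/
lemma rl_sub {f m₁ m₂ : ℝ → ℝ} (hfc : Continuous f) (hm₁ : Monotone m₁) (hm₂ : Monotone m₂)
    (hdecomp : ∀ x, f x = m₁ x - m₂ x) (x : ℝ) :
    hm₁.stieltjesFunction x - hm₂.stieltjesFunction x = f x := by
  rw [Monotone.stieltjesFunction_eq, Monotone.stieltjesFunction_eq]
  have t : Tendsto (fun y => m₁ y - m₂ y) (𝓝[>] x) (𝓝 (rightLim m₁ x - rightLim m₂ x)) :=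
    (hm₁.tendsto_rightLim x).sub (hm₂.tendsto_rightLim x)
  have tf : Tendsto (fun y => m₁ y - m₂ y) (𝓝[>] x) (𝓝 (f x)) :=
    ((hfc.tendsto x).mono_left nhdsWithin_le_nhds).congr fun y => hdecomp y
  exact tendsto_nhds_unique t tf

lemma ms_toReal {m : ℝ → ℝ} (hm : Monotone m) {x y : ℝ} (h : x ≤ y) :
    ((monoStieltjes hm) (Ioc x y)).toReal
      = hm.stieltjesFunction y - hm.stieltjesFunction x := by
  rw [monoStieltjes, StieltjesFunction.measure_Ioc,
    ENNReal.toReal_ofReal (sub_nonneg.2 (hm.stieltjesFunction.mono h))]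

lemma ms_fin {m : ℝ → ℝ} (hm : Monotone m) (x y : ℝ) :
    (monoStieltjes hm) (Ioc x y) < ⊤ := by
  rw [monoStieltjes, StieltjesFunction.measure_Ioc]
  exact ENNReal.ofReal_lt_top

/-- Mean value theorem for `exp`, allowing the endpoints in any order. -/
lemma exp_mvt (u v : ℝ) : ∃ c, min u v ≤ c ∧ c ≤ max u v ∧
    Real.exp v - Real.exp u = Real.exp c * (v - u) := by
  have key : ∀ u v : ℝ, u < v →
      ∃ c, u ≤ c ∧ c ≤ v ∧ Real.exp v - Real.exp u = Real.exp c * (v - u) := by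
    intro u v h
    obtain ⟨c, hc, hceq⟩ := exists_hasDerivAt_eq_slope Real.exp Real.exp h
      Real.continuous_exp.continuousOn (fun x _ => Real.hasDerivAt_exp x)
    refine ⟨c, hc.1.le, hc.2.le, ?_⟩
    rw [hceq, div_mul_cancel₀ _ (sub_ne_zero.2 (ne_of_gt h))]
  rcases lt_trichotomy u v with h | h | h
  · obtain ⟨c, h1, h2, h3⟩ := key u v h
    exact ⟨c, by rw [min_eq_left h.le]; exact h1, by rw [max_eq_right h.le]; exact h2, h3⟩
  · exact ⟨u, by simp [h], by simp [h], by rw [h]; ring⟩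
  · obtain ⟨c, h1, h2, h3⟩ := key v u h
    exact ⟨c, by rw [min_eq_right h.le]; exact h1, by rw [max_eq_left h.le]; exact h2,
      by linear_combination -h3⟩

lemma ms_integrableOn {m : ℝ → ℝ} (hm : Monotone m) {g : ℝ → ℝ} (hg : Continuous g)
    (x y : ℝ) : IntegrableOn g (Ioc x y) (monoStieltjes hm) := by
  have : IsLocallyFiniteMeasure (monoStieltjes hm) := by
    rw [monoStieltjes]; infer_instance
  exact ((hg.locallyIntegrable).integrableOn_isCompact isCompact_Icc).mono_set
    Ioc_subset_Icc_self

lemma est {μ : Measure ℝ} {g : ℝ → ℝ} {x y : ℝ} (hgi : IntegrableOn g (Ioc x y) μ)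
    (hfin : μ (Ioc x y) < ⊤) {K ε : ℝ} (hK : ∀ t ∈ Ioc x y, |g t - K| ≤ ε) :
    |(∫ t in Ioc x y, g t ∂μ) - K * (μ (Ioc x y)).toReal| ≤ ε * (μ (Ioc x y)).toReal := by
  have hconst : IntegrableOn (fun _ : ℝ => K) (Ioc x y) μ :=
    integrableOn_const hfin.ne
  have heq : (∫ t in Ioc x y, g t ∂μ) - K * (μ (Ioc x y)).toReal
      = ∫ t in Ioc x y, (g t - K) ∂μ := by
    rw [integral_sub hgi hconst, setIntegral_const]
    simp [smul_eq_mul, mul_comm, measureReal_def]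
  rw [heq]
  have := norm_setIntegral_le_of_norm_le_const hfin
    (f := fun t => g t - K) (C := ε) (fun t ht => by
      rw [Real.norm_eq_abs]; exact hK t ht)
  simpa [Real.norm_eq_abs, measureReal_def] using this

/-- A point between `min u v` and `max u v` is within `|u - v|` of `u`. -/
lemma abs_sub_le_of_between {u v w : ℝ} (h1 : min u v ≤ w) (h2 : w ≤ max u v) :
    |u - w| ≤ |u - v| := by
  rcases le_total u v with h | h
  · rw [min_eq_left h] at h1; rw [max_eq_right h] at h2
    rw [abs_of_nonpos (by linarith), abs_of_nonpos (by linarith)]; linarith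
  · rw [min_eq_right h] at h1; rw [max_eq_left h] at h2
    rw [abs_of_nonneg (by linarith), abs_of_nonneg (by linarith)]; linarith

lemma sum_setIntegral {μ : Measure ℝ} {g : ℝ → ℝ} (x : ℕ → ℝ)
    (hx : ∀ i, x i ≤ x (i + 1))
    (hgi : ∀ u v : ℝ, IntegrableOn g (Ioc u v) μ) (n : ℕ) :
    ∫ t in Ioc (x 0) (x n), g t ∂μ
      = ∑ i ∈ Finset.range n, ∫ t in Ioc (x i) (x (i + 1)), g t ∂μ := by
  induction n with
  | zero => simp
  | succ n ih =>
    have hmono : Monotone x := monotone_nat_of_le_succ hx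
    rw [Finset.sum_range_succ, ← ih, ← setIntegral_union (Ioc_disjoint_Ioc_of_le le_rfl)
      measurableSet_Ioc (hgi _ _) (hgi _ _),
      Ioc_union_Ioc_eq_Ioc (hmono (Nat.zero_le n)) (hx n)]

/-- chain rule for BV functions. Let `f : ℝ → ℝ` be continuous and of
locally bounded variation, i.e. `f = m₁ - m₂` with `m₁, m₂` increasing. Then `d(e^f) = e^f df`
as measures on bounded Borel sets: for any monotone decomposition `e^f = p₁ - p₂` and any
`a ≤ b`, `d(e^f)((a,b]) = ∫_{(a,b]} e^f df`. -/
theorem bv_chain_rule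
    (f m₁ m₂ : ℝ → ℝ) (hfc : Continuous f)
    (hm₁ : Monotone m₁) (hm₂ : Monotone m₂)
    (hdecomp : ∀ x, f x = m₁ x - m₂ x)
    (p₁ p₂ : ℝ → ℝ) (hp₁ : Monotone p₁) (hp₂ : Monotone p₂)
    (hpdecomp : ∀ x, Real.exp (f x) = p₁ x - p₂ x) :
    ∀ a b : ℝ, a ≤ b →
      ((monoStieltjes hp₁) (Ioc a b)).toReal - ((monoStieltjes hp₂) (Ioc a b)).toReal
        = (∫ x in Ioc a b, Real.exp (f x) ∂(monoStieltjes hm₁))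
          - ∫ x in Ioc a b, Real.exp (f x) ∂(monoStieltjes hm₂) := by
  intro a b hab
  set g : ℝ → ℝ := fun t => Real.exp (f t) with hgdef
  have hg : Continuous g := Real.continuous_exp.comp hfc
  have hLp : ∀ x, hp₁.stieltjesFunction x - hp₂.stieltjesFunction x = g x :=
    rl_sub hg hp₁ hp₂ (fun x => hpdecomp x)
  have hLm : ∀ x, hm₁.stieltjesFunction x - hm₂.stieltjesFunction x = f x :=
    rl_sub hfc hm₁ hm₂ hdecomp
  -- LHS equals g b - g a
  have hLHS : ((monoStieltjes hp₁) (Ioc a b)).toReal - ((monoStieltjes hp₂) (Ioc a b)).toReal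
      = g b - g a := by
    rw [ms_toReal hp₁ hab, ms_toReal hp₂ hab]
    have h1 := hLp a; have h2 := hLp b; linarith
  rw [hLHS]
  set s₁ := hm₁.stieltjesFunction with hs₁
  set s₂ := hm₂.stieltjesFunction with hs₂
  set μ₁ := monoStieltjes hm₁ with hμ₁
  set μ₂ := monoStieltjes hm₂ with hμ₂
  set C : ℝ := (s₁ b - s₁ a) + (s₂ b - s₂ a) with hC
  have hC0 : 0 ≤ C := by
    have := s₁.mono hab; have := s₂.mono hab; unfold C; linarith
  set D : ℝ := ((∫ x in Ioc a b, g x ∂μ₁) - ∫ x in Ioc a b, g x ∂μ₂) - (g b - g a) with hD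
  have key : ∀ ε : ℝ, 0 < ε → |D| ≤ ε * C := by
    intro ε hε
    -- uniform continuity of g on [a,b]
    have huc : UniformContinuousOn g (Icc a b) :=
      isCompact_Icc.uniformContinuousOn_of_continuous hg.continuousOn
    obtain ⟨δ, hδ, hδ'⟩ := Metric.uniformContinuousOn_iff.1 huc (ε / 2) (by linarith)
    -- choose n
    obtain ⟨n₀, hn₀⟩ := exists_nat_gt ((b - a) / δ)
    set n : ℕ := n₀ + 1 with hn
    have hnpos : (0 : ℝ) < n := by positivity
    have hstep : (b - a) / n < δ := by
      rw [div_lt_iff₀ hnpos]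
      have : (b - a) / δ < n := lt_of_lt_of_le hn₀ (by exact_mod_cast Nat.le_succ n₀)
      calc b - a = ((b - a) / δ) * δ := by field_simp
        _ < n * δ := mul_lt_mul_of_pos_right this hδ
        _ = δ * n := mul_comm _ _
    have hstep0 : 0 ≤ (b - a) / n := div_nonneg (by linarith) hnpos.le
    -- partition points
    set x : ℕ → ℝ := fun i => a + (b - a) * i / n with hx
    have hx0 : x 0 = a := by simp [hx]
    have hnne : (n : ℝ) ≠ 0 := ne_of_gt hnpos
    have hxn : x n = b := by
      simp only [hx]
      field_simp
      ring
    have hxstep : ∀ i : ℕ, x (i + 1) - x i = (b - a) / n := by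
      intro i
      simp only [hx]
      push_cast
      field_simp
      ring
    have hxle : ∀ i : ℕ, x i ≤ x (i + 1) := by
      intro i; rw [← sub_nonneg, hxstep i]; exact hstep0
    have hxmono : Monotone x := monotone_nat_of_le_succ hxle
    have hxmem : ∀ i : ℕ, i ≤ n → x i ∈ Icc a b := by
      intro i hi
      constructor
      · rw [← hx0]; exact hxmono (Nat.zero_le i)
      · rw [← hxn]; exact hxmono hi
    -- intermediate points from MVT for exp
    choose c hc1 hc2 hc3 using fun i : ℕ => exp_mvt (f (x i)) (f (x (i + 1)))
    -- pointwise estimate on each subinterval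
    have hpt : ∀ i : ℕ, i < n → ∀ t ∈ Ioc (x i) (x (i + 1)), |g t - Real.exp (c i)| ≤ ε := by
      intro i hi t ht
      have hi1 : i + 1 ≤ n := hi
      have hxi : x i ∈ Icc a b := hxmem i (le_of_lt hi)
      have hxi1 : x (i + 1) ∈ Icc a b := hxmem (i + 1) hi1
      have htm : t ∈ Icc a b := by
        constructor
        · exact hxi.1.trans ht.1.le
        · exact ht.2.trans hxi1.2
      have hd2' : x (i + 1) - x i < δ := by
        rw [hxstep i]; exact hstep
      have hd1 : dist t (x i) < δ := by
        rw [Real.dist_eq, abs_of_nonneg (by linarith [ht.1.le])]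
        have h2 := ht.2; linarith
      have hd2 : dist (x (i + 1)) (x i) < δ := by
        rw [Real.dist_eq, abs_of_nonneg (by linarith [hxle i])]
        exact hd2'
      have h1 : |g t - g (x i)| < ε / 2 := by
        have := hδ' t htm (x i) hxi hd1
        rwa [Real.dist_eq] at this
      have h2 : |g (x i) - g (x (i + 1))| < ε / 2 := by
        have := hδ' (x (i + 1)) hxi1 (x i) hxi hd2
        rw [Real.dist_eq] at this
        rwa [abs_sub_comm]
      -- exp (c i) lies between g (x i) and g (x (i+1))
      have hcb : min (g (x i)) (g (x (i + 1))) ≤ Real.exp (c i)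
          ∧ Real.exp (c i) ≤ max (g (x i)) (g (x (i + 1))) := by
        have hmin := hc1 i
        have hmax := hc2 i
        constructor
        · rcases le_total (f (x i)) (f (x (i + 1))) with h | h
          · rw [min_eq_left h] at hmin
            rw [min_eq_left (Real.exp_le_exp.2 h)]
            exact Real.exp_le_exp.2 hmin
          · rw [min_eq_right h] at hmin
            rw [min_eq_right (Real.exp_le_exp.2 h)]
            exact Real.exp_le_exp.2 hmin
        · rcases le_total (f (x i)) (f (x (i + 1))) with h | h
          · rw [max_eq_right h] at hmax
            rw [max_eq_right (Real.exp_le_exp.2 h)]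
            exact Real.exp_le_exp.2 hmax
          · rw [max_eq_left h] at hmax
            rw [max_eq_left (Real.exp_le_exp.2 h)]
            exact Real.exp_le_exp.2 hmax
      have h3 : |g (x i) - Real.exp (c i)| ≤ |g (x i) - g (x (i + 1))| :=
        abs_sub_le_of_between hcb.1 hcb.2
      calc |g t - Real.exp (c i)|
          ≤ |g t - g (x i)| + |g (x i) - Real.exp (c i)| := abs_sub_le _ _ _
        _ ≤ |g t - g (x i)| + |g (x i) - g (x (i + 1))| := by linarith
        _ ≤ ε := by linarith
    -- split the integrals over the partition
    have hgi₁ : ∀ u v : ℝ, IntegrableOn g (Ioc u v) μ₁ := fun u v => ms_integrableOn hm₁ hg u v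
    have hgi₂ : ∀ u v : ℝ, IntegrableOn g (Ioc u v) μ₂ := fun u v => ms_integrableOn hm₂ hg u v
    have hsum₁ : ∫ t in Ioc a b, g t ∂μ₁
        = ∑ i ∈ Finset.range n, ∫ t in Ioc (x i) (x (i + 1)), g t ∂μ₁ := by
      rw [← hx0, ← hxn]; exact sum_setIntegral x hxle hgi₁ n
    have hsum₂ : ∫ t in Ioc a b, g t ∂μ₂
        = ∑ i ∈ Finset.range n, ∫ t in Ioc (x i) (x (i + 1)), g t ∂μ₂ := by
      rw [← hx0, ← hxn]; exact sum_setIntegral x hxle hgi₂ n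
    have hsumg : g b - g a = ∑ i ∈ Finset.range n, (g (x (i + 1)) - g (x i)) := by
      rw [Finset.sum_range_sub (fun i => g (x i)), hx0, hxn]
    -- per-interval identities
    have hμtoReal₁ : ∀ i : ℕ, (μ₁ (Ioc (x i) (x (i + 1)))).toReal
        = s₁ (x (i + 1)) - s₁ (x i) := fun i => ms_toReal hm₁ (hxle i)
    have hμtoReal₂ : ∀ i : ℕ, (μ₂ (Ioc (x i) (x (i + 1)))).toReal
        = s₂ (x (i + 1)) - s₂ (x i) := fun i => ms_toReal hm₂ (hxle i)
    -- D as a sum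
    have hDsum : D = ∑ i ∈ Finset.range n,
        (((∫ t in Ioc (x i) (x (i + 1)), g t ∂μ₁)
            - Real.exp (c i) * (μ₁ (Ioc (x i) (x (i + 1)))).toReal)
          - ((∫ t in Ioc (x i) (x (i + 1)), g t ∂μ₂)
            - Real.exp (c i) * (μ₂ (Ioc (x i) (x (i + 1)))).toReal)) := by
      have hterm : ∀ i ∈ Finset.range n,
          g (x (i + 1)) - g (x i)
            = Real.exp (c i) * (μ₁ (Ioc (x i) (x (i + 1)))).toReal
              - Real.exp (c i) * (μ₂ (Ioc (x i) (x (i + 1)))).toReal := by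
        intro i _
        rw [hμtoReal₁ i, hμtoReal₂ i]
        have hfd : f (x (i + 1)) - f (x i)
            = (s₁ (x (i + 1)) - s₁ (x i)) - (s₂ (x (i + 1)) - s₂ (x i)) := by
          have ha' := hLm (x i); have hb' := hLm (x (i + 1)); simp only [← hs₁, ← hs₂] at *
          linarith
        have := hc3 i
        simp only [hgdef]
        rw [this]
        rw [show f (x (i + 1)) - f (x i)
          = (s₁ (x (i + 1)) - s₁ (x i)) - (s₂ (x (i + 1)) - s₂ (x i)) from hfd]
        ring
      rw [hD, hsum₁, hsum₂, hsumg, Finset.sum_congr rfl hterm]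
      rw [← Finset.sum_sub_distrib, ← Finset.sum_sub_distrib]
      apply Finset.sum_congr rfl
      intro i _
      ring
    -- bound each term
    have hbound : ∀ i ∈ Finset.range n,
        |((∫ t in Ioc (x i) (x (i + 1)), g t ∂μ₁)
            - Real.exp (c i) * (μ₁ (Ioc (x i) (x (i + 1)))).toReal)
          - ((∫ t in Ioc (x i) (x (i + 1)), g t ∂μ₂)
            - Real.exp (c i) * (μ₂ (Ioc (x i) (x (i + 1)))).toReal)|
        ≤ ε * ((s₁ (x (i + 1)) - s₁ (x i)) + (s₂ (x (i + 1)) - s₂ (x i))) := by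
      intro i hi
      have hi' := Finset.mem_range.1 hi
      have e₁ := est (hgi₁ (x i) (x (i + 1))) (ms_fin hm₁ _ _)
        (K := Real.exp (c i)) (fun t ht => hpt i hi' t ht)
      have e₂ := est (hgi₂ (x i) (x (i + 1))) (ms_fin hm₂ _ _)
        (K := Real.exp (c i)) (fun t ht => hpt i hi' t ht)
      rw [hμtoReal₁ i] at e₁
      rw [hμtoReal₂ i] at e₂
      calc _ ≤ |(∫ t in Ioc (x i) (x (i + 1)), g t ∂μ₁)
            - Real.exp (c i) * (μ₁ (Ioc (x i) (x (i + 1)))).toReal|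
          + |(∫ t in Ioc (x i) (x (i + 1)), g t ∂μ₂)
            - Real.exp (c i) * (μ₂ (Ioc (x i) (x (i + 1)))).toReal| := abs_sub _ _
        _ ≤ ε * ((s₁ (x (i + 1)) - s₁ (x i)) + (s₂ (x (i + 1)) - s₂ (x i))) := by
            rw [hμtoReal₁ i, hμtoReal₂ i]; nlinarith [e₁, e₂]
    calc |D| ≤ ∑ i ∈ Finset.range n,
          |((∫ t in Ioc (x i) (x (i + 1)), g t ∂μ₁)
              - Real.exp (c i) * (μ₁ (Ioc (x i) (x (i + 1)))).toReal)
            - ((∫ t in Ioc (x i) (x (i + 1)), g t ∂μ₂)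
              - Real.exp (c i) * (μ₂ (Ioc (x i) (x (i + 1)))).toReal)| := by
          rw [hDsum]; exact Finset.abs_sum_le_sum_abs _ _
      _ ≤ ∑ i ∈ Finset.range n,
            ε * ((s₁ (x (i + 1)) - s₁ (x i)) + (s₂ (x (i + 1)) - s₂ (x i))) :=
          Finset.sum_le_sum hbound
      _ = ε * C := by
          rw [← Finset.mul_sum]
          congr 1
          rw [Finset.sum_add_distrib, Finset.sum_range_sub (fun i => s₁ (x i)),
            Finset.sum_range_sub (fun i => s₂ (x i)), hx0, hxn]
  -- conclude D = 0
  have hD0 : D = 0 := by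
    have habs : |D| ≤ 0 := by
      apply le_of_forall_pos_le_add
      intro ε hε
      have h := key (ε / (C + 1)) (by positivity)
      have : ε / (C + 1) * C ≤ ε := by
        rw [div_mul_eq_mul_div, div_le_iff₀ (by linarith)]
        nlinarith
      linarith
    exact abs_eq_zero.1 (le_antisymm habs (abs_nonneg D))
  have : (∫ x in Ioc a b, g x ∂μ₁) - ∫ x in Ioc a b, g x ∂μ₂ = g b - g a := by
    have := hD0; unfold D at this; linarith
  simp only [hgdef] at this ⊢
  linarith
end
end
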